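/- For any consistent cut C of a distributed signal with skew bound ε, if C is not all of E, then the frontier timestamps t_n = sup C^τ[n] are all finite and satisfy |t_n − t_m| ≤ ε for all agents n, m. -/

import Mathlib

open scoped NNReal

/-- A consistent cut: a set of events closed under happened-before predecessors. -/
def ConsistentCut {N : ℕ} (hb : (Fin N × ℝ≥0) → (Fin N × ℝ≥0) → Prop)
    (C : Set (Fin N × ℝ≥0)) : Prop :=
  ∀ e ∈ C, ∀ f, hb f e → f ∈ C

/-- For a consistent cut `C ≠ E` containing at least one event of every agent, the frontier
timestamps `tₙ = sup Cᵗ[n]` are all finite (the timestamp sets are bounded above) and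
satisfy `|tₙ - tₘ| ≤ ε` for all agents `n`, `m`. -/
theorem frontier_skew_bound {N : ℕ} (ε : ℝ≥0) (hε : 0 < ε)
    (hb : (Fin N × ℝ≥0) → (Fin N × ℝ≥0) → Prop)
    (hlocal : ∀ (n : Fin N) (t t' : ℝ≥0), t < t' → hb (n, t) (n, t'))
    (hskew : ∀ (n m : Fin N) (t t' : ℝ≥0), t + ε ≤ t' → hb (n, t) (m, t'))
    (htrans : Transitive hb)
    (C : Set (Fin N × ℝ≥0))
    (hC : ConsistentCut hb C)
    (hnonempty : ∀ n : Fin N, ∃ t : ℝ≥0, (n, t) ∈ C)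
    (hne : C ≠ Set.univ) :
    (∀ n : Fin N, BddAbove {t | (n, t) ∈ C}) ∧
      ∀ n m : Fin N,
        |((sSup {t | (n, t) ∈ C} : ℝ≥0) : ℝ) - ((sSup {t | (m, t) ∈ C} : ℝ≥0) : ℝ)| ≤ ε := by
  obtain ⟨⟨m0, s⟩, hs⟩ : ∃ e, e ∉ C := by
    by_contra h
    push_neg at h
    exact hne (Set.eq_univ_of_forall h)
  have hbdd : ∀ n : Fin N, BddAbove {t | (n, t) ∈ C} := by
    intro n
    refine ⟨s + ε, fun t ht => ?_⟩
    by_contra hlt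
    push_neg at hlt
    exact hs (hC _ ht _ (hskew m0 n s t hlt.le))
  refine ⟨hbdd, fun n m => ?_⟩
  have key : ∀ n m : Fin N,
      (sSup {t | (n, t) ∈ C} : ℝ≥0) ≤ sSup {t | (m, t) ∈ C} + ε := by
    intro n m
    refine csSup_le ?_ fun t ht => ?_
    · obtain ⟨t, ht⟩ := hnonempty n
      exact ⟨t, ht⟩
    · by_cases hle : t ≤ ε
      · exact hle.trans le_add_self
      · push_neg at hle
        have hmem : (m, t - ε) ∈ C := by
          refine hC _ ht _ (hskew m n (t - ε) t ?_)
          rw [tsub_add_cancel_of_le hle.le]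
        have h1 : t - ε ≤ sSup {t | (m, t) ∈ C} := le_csSup (hbdd m) hmem
        calc t = t - ε + ε := (tsub_add_cancel_of_le hle.le).symm
          _ ≤ _ := add_le_add_left h1 ε
  rw [abs_sub_le_iff]
  constructor
  · have := key n m
    have : ((sSup {t | (n, t) ∈ C} : ℝ≥0) : ℝ) ≤ (sSup {t | (m, t) ∈ C} : ℝ≥0) + ε := by
      exact_mod_cast this
    linarith
  · have := key m n
    have : ((sSup {t | (m, t) ∈ C} : ℝ≥0) : ℝ) ≤ (sSup {t | (n, t) ∈ C} : ℝ≥0) + ε := by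
      exact_mod_cast this
    linarith
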